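/- Assume the standard scarred-sequence setting and suppose additionally given, for each N and each i ∈ I_N, a self-adjoint linear operator h_{N,i} on the M_N-qudit space that is supported on X_{N,i} and has operator norm ‖h_{N,i}‖ ≤ C_h, where C_h ≥ 0 is a constant independent of N and i. Then ‖(Σ_{i∈I_N} P_{N,i} ∘ h_{N,i} ∘ P_{N,i}) A_N‖ → 0 as N → ∞. -/

import Mathlib

open Filter
open scoped BigOperators

noncomputable section

/-- The `M`-qudit space: complex functions on configurations `Fin M → Fin d`,
with the standard (Euclidean) inner product. -/
abbrev QuditSpace (d M : ℕ) : Type := EuclideanSpace ℂ (Fin M → Fin d)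

/-- The computational basis vector indexed by the configuration `s`. -/
def basisVec {d M : ℕ} (s : Fin M → Fin d) : QuditSpace d M :=
  EuclideanSpace.single s 1

/-- The matrix element `⟨e_s, T e_t⟩` of an operator `T` on the qudit space. -/
def matElem {d M : ℕ} (T : QuditSpace d M →L[ℂ] QuditSpace d M)
    (s t : Fin M → Fin d) : ℂ :=
  inner ℂ (basisVec s) (T (basisVec t))

/-- `T` is supported on the set of sites `X`: its matrix elements vanish whenever the two
configurations differ at a site outside `X`, and (among configuration pairs agreeing
outside `X`) they depend only on the restrictions of the configurations to `X`. -/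
def SupportedOn {d M : ℕ} (X : Finset (Fin M))
    (T : QuditSpace d M →L[ℂ] QuditSpace d M) : Prop :=
  (∀ s t : Fin M → Fin d, (∃ j ∉ X, s j ≠ t j) → matElem T s t = 0) ∧
  (∀ s t s' t' : Fin M → Fin d,
      (∀ j ∈ X, s j = s' j) → (∀ j ∈ X, t j = t' j) →
      (∀ j ∉ X, s j = t j) → (∀ j ∉ X, s' j = t' j) →
      matElem T s t = matElem T s' t')

/-- An orthogonal projection: a self-adjoint idempotent operator. -/
def IsOrthProj {d M : ℕ} (P : QuditSpace d M →L[ℂ] QuditSpace d M) : Prop :=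
  (∀ v w : QuditSpace d M, (inner ℂ (P v) w : ℂ) = inner ℂ v (P w)) ∧ P ∘L P = P


lemma basisVec_eq {d M : ℕ} (s : Fin M → Fin d) :
    basisVec (d := d) s = (EuclideanSpace.basisFun (Fin M → Fin d) ℂ) s := by
  simp [basisVec, EuclideanSpace.basisFun_apply]

lemma matElem_comp {d M : ℕ} (T S : QuditSpace d M →L[ℂ] QuditSpace d M)
    (s t : Fin M → Fin d) :
    matElem (T ∘L S) s t = ∑ u, matElem T s u * matElem S u t := by
  classical
  set b := EuclideanSpace.basisFun (Fin M → Fin d) ℂ with hb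
  have key : S (basisVec t) = ∑ u, (inner ℂ (basisVec u) (S (basisVec t)) : ℂ) • basisVec u := by
    simp_rw [basisVec_eq, ← hb]
    conv_lhs => rw [← b.sum_repr (S (b t))]
    exact Finset.sum_congr rfl fun u _ => by rw [b.repr_apply_apply]
  calc matElem (T ∘L S) s t
      = inner ℂ (basisVec s) (T (∑ u, (inner ℂ (basisVec u) (S (basisVec t)) : ℂ) • basisVec u)) := by
        rw [← key]; rfl
    _ = ∑ u, matElem T s u * matElem S u t := by
        rw [map_sum, inner_sum]
        refine Finset.sum_congr rfl fun u _ => ?_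
        rw [map_smul, inner_smul_right, mul_comm]
        rfl

lemma clm_ext_of_matElem {d M : ℕ} {T S : QuditSpace d M →L[ℂ] QuditSpace d M}
    (h : ∀ s t, matElem T s t = matElem S s t) : T = S := by
  classical
  set b := EuclideanSpace.basisFun (Fin M → Fin d) ℂ with hb
  have hbasis : ∀ t, T (b t) = S (b t) := by
    intro t
    apply b.repr.injective
    ext u
    have h1 := h u t
    simp only [matElem, basisVec_eq, ← hb] at h1
    simpa [b.repr_apply_apply] using h1
  apply ContinuousLinearMap.coe_injective
  exact Module.Basis.ext b.toBasis (fun t => by simpa using hbasis t)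

lemma supportedOn_comm {d M : ℕ} {X Y : Finset (Fin M)}
    (hXY : ∀ j, j ∈ X → j ∉ Y)
    {T S : QuditSpace d M →L[ℂ] QuditSpace d M}
    (hT : SupportedOn X T) (hS : SupportedOn Y S) :
    T ∘L S = S ∘L T := by
  classical
  apply clm_ext_of_matElem
  intro s t
  rw [matElem_comp, matElem_comp]
  by_cases hst : ∀ j, j ∉ X → j ∉ Y → s j = t j
  · set u₀ : Fin M → Fin d := fun j => if j ∈ X then t j else s j with hu₀
    set v₀ : Fin M → Fin d := fun j => if j ∈ Y then t j else s j with hv₀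
    have e1 : ∑ u, matElem T s u * matElem S u t = matElem T s u₀ * matElem S u₀ t := by
      refine Finset.sum_eq_single u₀ (fun u _ hu => ?_) (by simp)
      obtain ⟨j, hj⟩ := Function.ne_iff.mp hu
      by_cases hjX : j ∈ X
      · have h1 : u j ≠ t j := by simpa [hu₀, hjX] using hj
        have := hS.1 u t ⟨j, hXY j hjX, h1⟩
        rw [this, mul_zero]
      · have h1 : s j ≠ u j := by
          intro hc; exact hj (by simp [hu₀, hjX, ← hc])
        rw [hT.1 s u ⟨j, hjX, h1⟩, zero_mul]
    have e2 : ∑ u, matElem S s u * matElem T u t = matElem S s v₀ * matElem T v₀ t := by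
      refine Finset.sum_eq_single v₀ (fun u _ hu => ?_) (by simp)
      obtain ⟨j, hj⟩ := Function.ne_iff.mp hu
      by_cases hjY : j ∈ Y
      · have h1 : u j ≠ t j := by simpa [hv₀, hjY] using hj
        have hjX : j ∉ X := fun hc => hXY j hc hjY
        rw [hT.1 u t ⟨j, hjX, h1⟩, mul_zero]
      · have h1 : s j ≠ u j := by
          intro hc; exact hj (by simp [hv₀, hjY, ← hc])
        rw [hS.1 s u ⟨j, hjY, h1⟩, zero_mul]
    rw [e1, e2]
    have eT : matElem T s u₀ = matElem T v₀ t := by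
      refine hT.2 s u₀ v₀ t ?_ ?_ ?_ ?_
      · intro j hj; simp [hv₀, hXY j hj]
      · intro j hj; simp [hu₀, hj]
      · intro j hj; simp [hu₀, hj]
      · intro j hj
        by_cases hjY : j ∈ Y
        · simp [hv₀, hjY]
        · simp [hv₀, hjY, hst j hj hjY]
    have eS : matElem S u₀ t = matElem S s v₀ := by
      refine hS.2 u₀ t s v₀ ?_ ?_ ?_ ?_
      · intro j hj
        have hjX : j ∉ X := fun hc => hXY j hc hj
        simp [hu₀, hjX]
      · intro j hj; simp [hv₀, hj]
      · intro j hj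
        by_cases hjX : j ∈ X
        · simp [hu₀, hjX]
        · simp [hu₀, hjX, hst j hjX hj]
      · intro j hj; simp [hv₀, hj]
    rw [eT, eS, mul_comm]
  · push_neg at hst
    obtain ⟨j, hjX, hjY, hjst⟩ := hst
    rw [Finset.sum_eq_zero, Finset.sum_eq_zero]
    · intro u _
      by_cases hc : s j = u j
      · rw [hT.1 u t ⟨j, hjX, fun hut => hjst (hc.trans hut)⟩, mul_zero]
      · rw [hS.1 s u ⟨j, hjY, hc⟩, zero_mul]
    · intro u _
      by_cases hc : s j = u j
      · rw [hS.1 u t ⟨j, hjY, fun hut => hjst (hc.trans hut)⟩, mul_zero]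
      · rw [hT.1 s u ⟨j, hjX, hc⟩, zero_mul]

lemma orthProj_norm_le {d M : ℕ} {P : QuditSpace d M →L[ℂ] QuditSpace d M}
    (hP : IsOrthProj P) (v : QuditSpace d M) : ‖P v‖ ≤ ‖v‖ := by
  have hPP : P (P v) = P v := ContinuousLinearMap.ext_iff.mp hP.2 v
  have h1 : (inner ℂ (P v) (P v) : ℂ) = inner ℂ v (P v) := by
    rw [hP.1 v (P v), hPP]
  have h2 : ‖P v‖ ^ 2 ≤ ‖v‖ * ‖P v‖ := by
    rw [← inner_self_eq_norm_sq (𝕜 := ℂ) (P v), h1]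
    calc RCLike.re (inner ℂ v (P v) : ℂ) ≤ ‖(inner ℂ v (P v) : ℂ)‖ := RCLike.re_le_norm _
      _ ≤ ‖v‖ * ‖P v‖ := norm_inner_le_norm _ _
  rcases eq_or_lt_of_le (norm_nonneg (P v)) with hz | hz
  · rw [← hz]; exact norm_nonneg v
  · nlinarith [h2]

lemma key_bound {d M : ℕ} {ι : Type} [Fintype ι] [DecidableEq ι] (Cov : ℕ)
    (X : ι → Finset (Fin M))
    (P h : ι → QuditSpace d M →L[ℂ] QuditSpace d M)
    (A : QuditSpace d M) (hA : ‖A‖ = 1)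
    (hC : ∀ i, (Finset.univ.filter fun i' => i' ≠ i ∧ (X i ∩ X i').Nonempty).card ≤ Cov)
    (hproj : ∀ i, IsOrthProj (P i))
    (hsupp : ∀ i, SupportedOn (X i) (P i))
    (hhsupp : ∀ i, SupportedOn (X i) (h i))
    (Ch : ℝ) (hCh : 0 ≤ Ch) (hhnorm : ∀ i, ‖h i‖ ≤ Ch) :
    ‖(∑ i, (P i) ∘L (h i) ∘L (P i)) A‖ ^ 2 ≤
      Ch ^ 2 * (‖(∑ i, P i) A‖ ^ 2 + 2 * ((Cov : ℝ) + 1) * ‖(∑ i, P i) A‖) := by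
  classical
  set ε := ‖(∑ i, P i) A‖ with hε
  have hε0 : 0 ≤ ε := norm_nonneg _
  set a : ι → ℝ := fun i => ‖P i A‖ with ha
  have ha0 : ∀ i, 0 ≤ a i := fun i => norm_nonneg _
  set Q : ι → QuditSpace d M →L[ℂ] QuditSpace d M := fun i => (P i) ∘L (h i) ∘L (P i) with hQ
  have hPP : ∀ i (v : QuditSpace d M), P i (P i v) = P i v :=
    fun i v => ContinuousLinearMap.ext_iff.mp (hproj i).2 v
  have haP : ∀ i, (inner ℂ A (P i A) : ℂ) = inner ℂ (P i A) (P i A) := fun i => by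
    conv_lhs => rw [← hPP i A]
    exact ((hproj i).1 A (P i A)).symm
  set S := ∑ i, a i ^ 2 with hSdef
  have hS : S ≤ ε := by
    have h2 : S = RCLike.re (inner ℂ A ((∑ i, P i) A) : ℂ) := by
      rw [ContinuousLinearMap.sum_apply, inner_sum, map_sum]
      exact Finset.sum_congr rfl fun i _ => by rw [haP i, inner_self_eq_norm_sq]
    rw [h2]
    calc RCLike.re (inner ℂ A ((∑ i, P i) A) : ℂ)
        ≤ ‖(inner ℂ A ((∑ i, P i) A) : ℂ)‖ := RCLike.re_le_norm _
      _ ≤ ‖A‖ * ‖(∑ i, P i) A‖ := norm_inner_le_norm _ _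
      _ = ε := by rw [hA, one_mul]
  have hS0 : 0 ≤ S := Finset.sum_nonneg fun i _ => sq_nonneg _
  have hQnorm : ∀ i, ‖Q i A‖ ≤ Ch * a i := fun i =>
    calc ‖P i (h i (P i A))‖ ≤ ‖h i (P i A)‖ := orthProj_norm_le (hproj i) _
      _ ≤ ‖h i‖ * ‖P i A‖ := (h i).le_opNorm _
      _ ≤ Ch * a i := mul_le_mul_of_nonneg_right (hhnorm i) (norm_nonneg _)
  -- overlap predicate
  set ovl : ι → ι → Prop := fun i j => j = i ∨ (X i ∩ X j).Nonempty with hovl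
  have hovl_symm : ∀ i j, ovl i j ↔ ovl j i := by
    intro i j
    simp only [hovl, Finset.inter_comm, eq_comm]
  have hnb_card : ∀ i, (Finset.univ.filter (ovl i)).card ≤ Cov + 1 := by
    intro i
    have hsub : Finset.univ.filter (ovl i) ⊆
        insert i (Finset.univ.filter fun j => j ≠ i ∧ (X i ∩ X j).Nonempty) := by
      intro j hj
      simp only [Finset.mem_filter, Finset.mem_univ, true_and, hovl] at hj
      by_cases hji : j = i
      · subst hji; exact Finset.mem_insert_self _ _
      · rcases hj with rfl | hj
        · exact Finset.mem_insert_self _ _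
        · exact Finset.mem_insert_of_mem (by simp [hji, hj])
    calc (Finset.univ.filter (ovl i)).card
        ≤ (insert i (Finset.univ.filter fun j => j ≠ i ∧ (X i ∩ X j).Nonempty)).card :=
          Finset.card_le_card hsub
      _ ≤ (Finset.univ.filter fun j => j ≠ i ∧ (X i ∩ X j).Nonempty).card + 1 :=
          Finset.card_insert_le _ _
      _ ≤ Cov + 1 := by have := hC i; omega
  have hcov1 : (0:ℝ) ≤ (Cov : ℝ) + 1 := by positivity
  -- the overlap double sum of a i * a j
  have hdiag : ∀ (f : ι → ℝ), (∀ i, 0 ≤ f i) → (∀ i, f i ≤ a i ^ 2) →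
      ∑ i, ∑ _j ∈ Finset.univ.filter (ovl i), f i ≤ ((Cov : ℝ) + 1) * S := by
    intro f hf hfa
    have hstep : ∀ i, ∑ _j ∈ Finset.univ.filter (ovl i), f i ≤ ((Cov : ℝ) + 1) * a i ^ 2 := by
      intro i
      rw [Finset.sum_const, nsmul_eq_mul]
      apply mul_le_mul _ (hfa i) (hf i) hcov1
      exact_mod_cast hnb_card i
    calc ∑ i, ∑ _j ∈ Finset.univ.filter (ovl i), f i
        ≤ ∑ i, ((Cov : ℝ) + 1) * a i ^ 2 := Finset.sum_le_sum fun i _ => hstep i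
      _ = ((Cov : ℝ) + 1) * S := by rw [hSdef, Finset.mul_sum]
  have hovl_a : ∑ i, ∑ j ∈ Finset.univ.filter (ovl i), a i * a j ≤ ((Cov : ℝ) + 1) * S := by
    have step1 : ∑ i, ∑ j ∈ Finset.univ.filter (ovl i), a i * a j
        ≤ ∑ i, ∑ j ∈ Finset.univ.filter (ovl i), (a i ^ 2 + a j ^ 2) / 2 :=
      Finset.sum_le_sum fun i _ => Finset.sum_le_sum fun j _ => by
        nlinarith [sq_nonneg (a i - a j)]
    have step2 : ∑ i, ∑ j ∈ Finset.univ.filter (ovl i), ((a i ^ 2 + a j ^ 2) / 2 : ℝ)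
        = (∑ i, ∑ _j ∈ Finset.univ.filter (ovl i), a i ^ 2
          + ∑ i, ∑ j ∈ Finset.univ.filter (ovl i), a j ^ 2) / 2 := by
      rw [← Finset.sum_add_distrib, Finset.sum_div]
      refine Finset.sum_congr rfl fun i _ => ?_
      rw [← Finset.sum_add_distrib, Finset.sum_div]
    have swap : ∑ i, ∑ j ∈ Finset.univ.filter (ovl i), (a j ^ 2 : ℝ)
        = ∑ j, ∑ _i ∈ Finset.univ.filter (ovl j), a j ^ 2 := by
      simp_rw [Finset.sum_filter]
      rw [Finset.sum_comm]
      exact Finset.sum_congr rfl fun j _ => Finset.sum_congr rfl fun i _ =>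
        if_congr (hovl_symm i j) rfl rfl
    have hb1 : ∑ i, ∑ _j ∈ Finset.univ.filter (ovl i), (a i ^ 2 : ℝ) ≤ ((Cov : ℝ) + 1) * S :=
      hdiag (fun i => a i ^ 2) (fun i => sq_nonneg _) (fun i => le_refl _)
    have hb2 : ∑ i, ∑ j ∈ Finset.univ.filter (ovl i), (a j ^ 2 : ℝ) ≤ ((Cov : ℝ) + 1) * S := by
      rw [swap]
      exact hdiag (fun i => a i ^ 2) (fun i => sq_nonneg _) (fun i => le_refl _)
    calc ∑ i, ∑ j ∈ Finset.univ.filter (ovl i), a i * a j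
        ≤ (∑ i, ∑ _j ∈ Finset.univ.filter (ovl i), a i ^ 2
          + ∑ i, ∑ j ∈ Finset.univ.filter (ovl i), a j ^ 2) / 2 := step1.trans (le_of_eq step2)
      _ ≤ (((Cov : ℝ) + 1) * S + ((Cov : ℝ) + 1) * S) / 2 := by linarith
      _ = ((Cov : ℝ) + 1) * S := by ring
  -- the matrix rre
  set rre : ι → ι → ℝ := fun i j => RCLike.re (inner ℂ (P i A) (P j A) : ℂ) with hrre
  have habs : ∀ i j, |rre i j| ≤ a i * a j := fun i j =>
    (RCLike.abs_re_le_norm _).trans (norm_inner_le_norm _ _)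
  have htotal : ∑ i, ∑ j, rre i j = ε ^ 2 := by
    have h1 : (inner ℂ ((∑ i, P i) A) ((∑ i, P i) A) : ℂ) = ∑ i, ∑ j, inner ℂ (P i A) (P j A) := by
      rw [ContinuousLinearMap.sum_apply, sum_inner]
      exact Finset.sum_congr rfl fun i _ => inner_sum _ _ _
    have h2 := congrArg RCLike.re h1
    rw [inner_self_eq_norm_sq, map_sum] at h2
    simp_rw [map_sum] at h2
    rw [← h2]
  -- expansion of the target norm
  have hexp : ‖(∑ i, Q i) A‖ ^ 2 = ∑ i, ∑ j, RCLike.re (inner ℂ (Q i A) (Q j A) : ℂ) := by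
    have h1 : (inner ℂ ((∑ i, Q i) A) ((∑ i, Q i) A) : ℂ) = ∑ i, ∑ j, inner ℂ (Q i A) (Q j A) := by
      rw [ContinuousLinearMap.sum_apply, sum_inner]
      exact Finset.sum_congr rfl fun i _ => inner_sum _ _ _
    have h2 := congrArg RCLike.re h1
    rw [inner_self_eq_norm_sq, map_sum] at h2
    simp_rw [map_sum] at h2
    rw [h2]
  -- disjoint-pair estimate
  have hdisjoint : ∀ i j, ¬ ovl i j →
      RCLike.re (inner ℂ (Q i A) (Q j A) : ℂ) ≤ Ch ^ 2 * rre j i := by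
    intro i j hno
    have hd : ∀ k, k ∈ X i → k ∉ X j := by
      intro k hk hk'
      exact hno (Or.inr ⟨k, Finset.mem_inter.mpr ⟨hk, hk'⟩⟩)
    have e1 : ∀ v, P i (P j v) = P j (P i v) := fun v =>
      ContinuousLinearMap.ext_iff.mp (supportedOn_comm hd (hsupp i) (hsupp j)) v
    have e2 : ∀ v, P i (h j v) = h j (P i v) := fun v =>
      ContinuousLinearMap.ext_iff.mp (supportedOn_comm hd (hsupp i) (hhsupp j)) v
    have e3 : ∀ v, h i (P j v) = P j (h i v) := fun v =>
      ContinuousLinearMap.ext_iff.mp (supportedOn_comm hd (hhsupp i) (hsupp j)) v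
    set w : QuditSpace d M := P i (P j A) with hw
    have claim1 : (inner ℂ (Q i A) (Q j A) : ℂ) = inner ℂ (h i w) (h j w) := by
      have s0 : Q i A = P i (h i (P i A)) := rfl
      have s0' : Q j A = P j (h j (P j A)) := rfl
      rw [s0, s0']
      rw [(hproj i).1 (h i (P i A)) (P j (h j (P j A)))]
      rw [e1 (h j (P j A)), e2 (P j A), ← hw]
      rw [← (hproj j).1 (h i (P i A)) (h j w)]
      rw [← e3 (P i A), ← e1 A, ← hw]
    have claim2 : ‖w‖ ^ 2 = rre j i := by
      rw [← inner_self_eq_norm_sq (𝕜 := ℂ) w, hrre]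
      congr 1
      calc (inner ℂ w w : ℂ) = inner ℂ (P j A) (P i w) := (hproj i).1 (P j A) w
        _ = inner ℂ (P j A) (P i (P j A)) := by rw [hw, hPP]
        _ = inner ℂ (P j A) (P j (P i A)) := by rw [e1 A]
        _ = inner ℂ (P j (P j A)) (P i A) := ((hproj j).1 (P j A) (P i A)).symm
        _ = inner ℂ (P j A) (P i A) := by rw [hPP]
    have hnw : ∀ k, ‖(h k) w‖ ≤ Ch * ‖w‖ := fun k =>
      ((h k).le_opNorm w).trans (mul_le_mul_of_nonneg_right (hhnorm k) (norm_nonneg _))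
    calc RCLike.re (inner ℂ (Q i A) (Q j A) : ℂ)
        ≤ ‖(inner ℂ (Q i A) (Q j A) : ℂ)‖ := RCLike.re_le_norm _
      _ = ‖(inner ℂ (h i w) (h j w) : ℂ)‖ := by rw [claim1]
      _ ≤ ‖h i w‖ * ‖h j w‖ := norm_inner_le_norm _ _
      _ ≤ (Ch * ‖w‖) * (Ch * ‖w‖) :=
          mul_le_mul (hnw i) (hnw j) (norm_nonneg _) (by positivity)
      _ = Ch ^ 2 * ‖w‖ ^ 2 := by ring
      _ = Ch ^ 2 * rre j i := by rw [claim2]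
  -- split the double sum
  set t : ι → ι → ℝ := fun i j => RCLike.re (inner ℂ (Q i A) (Q j A) : ℂ) with ht
  have hsplit : ∑ i, ∑ j, t i j
      = ∑ i, ∑ j ∈ Finset.univ.filter (ovl i), t i j
      + ∑ i, ∑ j ∈ Finset.univ.filter (fun j => ¬ ovl i j), t i j := by
    rw [← Finset.sum_add_distrib]
    exact Finset.sum_congr rfl fun i _ =>
      (Finset.sum_filter_add_sum_filter_not Finset.univ (ovl i) _).symm
  -- part 1
  have hT1 : ∑ i, ∑ j ∈ Finset.univ.filter (ovl i), t i j ≤ Ch ^ 2 * (((Cov : ℝ) + 1) * S) := by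
    have step1 : ∑ i, ∑ j ∈ Finset.univ.filter (ovl i), t i j
        ≤ ∑ i, ∑ j ∈ Finset.univ.filter (ovl i), Ch ^ 2 * (a i * a j) :=
      Finset.sum_le_sum fun i _ => Finset.sum_le_sum fun j _ => by
        calc t i j ≤ ‖(inner ℂ (Q i A) (Q j A) : ℂ)‖ := RCLike.re_le_norm _
          _ ≤ ‖Q i A‖ * ‖Q j A‖ := norm_inner_le_norm _ _
          _ ≤ (Ch * a i) * (Ch * a j) :=
              mul_le_mul (hQnorm i) (hQnorm j) (norm_nonneg _) (by positivity)
          _ = Ch ^ 2 * (a i * a j) := by ring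
    have step2 : ∑ i, ∑ j ∈ Finset.univ.filter (ovl i), Ch ^ 2 * (a i * a j)
        = Ch ^ 2 * ∑ i, ∑ j ∈ Finset.univ.filter (ovl i), a i * a j := by
      rw [Finset.mul_sum]
      exact Finset.sum_congr rfl fun i _ => (Finset.mul_sum _ _ _).symm
    calc ∑ i, ∑ j ∈ Finset.univ.filter (ovl i), t i j
        ≤ Ch ^ 2 * ∑ i, ∑ j ∈ Finset.univ.filter (ovl i), a i * a j := step1.trans (le_of_eq step2)
      _ ≤ Ch ^ 2 * (((Cov : ℝ) + 1) * S) :=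
          mul_le_mul_of_nonneg_left hovl_a (sq_nonneg Ch)
  -- part 2
  have hT2 : ∑ i, ∑ j ∈ Finset.univ.filter (fun j => ¬ ovl i j), t i j
      ≤ Ch ^ 2 * (ε ^ 2 + ((Cov : ℝ) + 1) * S) := by
    have step1 : ∑ i, ∑ j ∈ Finset.univ.filter (fun j => ¬ ovl i j), t i j
        ≤ ∑ i, ∑ j ∈ Finset.univ.filter (fun j => ¬ ovl i j), Ch ^ 2 * rre j i :=
      Finset.sum_le_sum fun i _ => Finset.sum_le_sum fun j hj => by
        have hno : ¬ ovl i j := (Finset.mem_filter.mp hj).2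
        exact hdisjoint i j hno
    have step2 : ∑ i, ∑ j ∈ Finset.univ.filter (fun j => ¬ ovl i j), (rre j i : ℝ)
        ≤ ε ^ 2 + ((Cov : ℝ) + 1) * S := by
      have hcompl : ∀ i, ∑ j ∈ Finset.univ.filter (fun j => ¬ ovl i j), (rre j i : ℝ)
          = ∑ j, rre j i - ∑ j ∈ Finset.univ.filter (ovl i), rre j i := by
        intro i
        have := Finset.sum_filter_add_sum_filter_not Finset.univ (ovl i) (fun j => (rre j i : ℝ))
        linarith
      have htot2 : ∑ i, ∑ j, (rre j i : ℝ) = ε ^ 2 := by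
        rw [Finset.sum_comm]; exact htotal
      have hbound : -(∑ i, ∑ j ∈ Finset.univ.filter (ovl i), (rre j i : ℝ))
          ≤ ((Cov : ℝ) + 1) * S := by
        have : ∑ i, ∑ j ∈ Finset.univ.filter (ovl i), -(rre j i : ℝ)
            ≤ ∑ i, ∑ j ∈ Finset.univ.filter (ovl i), a i * a j :=
          Finset.sum_le_sum fun i _ => Finset.sum_le_sum fun j _ => by
            have := habs j i
            have h1 : -(rre j i) ≤ |rre j i| := neg_le_abs _
            calc -(rre j i) ≤ a j * a i := h1.trans (habs j i)
              _ = a i * a j := mul_comm _ _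
        calc -(∑ i, ∑ j ∈ Finset.univ.filter (ovl i), (rre j i : ℝ))
            = ∑ i, ∑ j ∈ Finset.univ.filter (ovl i), -(rre j i : ℝ) := by
              simp [Finset.sum_neg_distrib]
          _ ≤ ∑ i, ∑ j ∈ Finset.univ.filter (ovl i), a i * a j := this
          _ ≤ ((Cov : ℝ) + 1) * S := hovl_a
      calc ∑ i, ∑ j ∈ Finset.univ.filter (fun j => ¬ ovl i j), (rre j i : ℝ)
          = ∑ i, (∑ j, rre j i - ∑ j ∈ Finset.univ.filter (ovl i), rre j i) :=
            Finset.sum_congr rfl fun i _ => hcompl i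
        _ = ∑ i, ∑ j, (rre j i : ℝ) - ∑ i, ∑ j ∈ Finset.univ.filter (ovl i), rre j i :=
            Finset.sum_sub_distrib _ _
        _ ≤ ε ^ 2 + ((Cov : ℝ) + 1) * S := by rw [htot2]; linarith
    calc ∑ i, ∑ j ∈ Finset.univ.filter (fun j => ¬ ovl i j), t i j
        ≤ ∑ i, ∑ j ∈ Finset.univ.filter (fun j => ¬ ovl i j), Ch ^ 2 * rre j i := step1
      _ = Ch ^ 2 * ∑ i, ∑ j ∈ Finset.univ.filter (fun j => ¬ ovl i j), rre j i := by
          rw [Finset.mul_sum]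
          exact Finset.sum_congr rfl fun i _ => (Finset.mul_sum _ _ _).symm
      _ ≤ Ch ^ 2 * (ε ^ 2 + ((Cov : ℝ) + 1) * S) :=
          mul_le_mul_of_nonneg_left step2 (sq_nonneg Ch)
  -- assemble
  have key : ∑ i, ∑ j, t i j ≤ Ch ^ 2 * (ε ^ 2 + 2 * ((Cov : ℝ) + 1) * ε) := by
    rw [hsplit]
    have hprod : 0 ≤ Ch ^ 2 * (((Cov : ℝ) + 1) * (ε - S)) := by
      apply mul_nonneg (sq_nonneg Ch)
      exact mul_nonneg hcov1 (by linarith)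
    nlinarith [hT1, hT2]
  rw [hexp]
  exact key

/-- **Proposition 1 of the paper** (standard scarred-sequence setting): asymptotic zero-energy
states of the reference Hamiltonian `∑ i P_{N,i}` are asymptotic zero modes of any deformed
Hamiltonian `∑ i P_{N,i} ∘ h_{N,i} ∘ P_{N,i}` with uniformly bounded self-adjoint local
generators `h_{N,i}` supported on the `X_{N,i}`. -/
theorem deformed_hamiltonian_asymptotically_annihilates
    (d K C : ℕ) (hd : 2 ≤ d)
    (M : ℕ → ℕ) (I : ℕ → Type) [∀ N, Fintype (I N)] [∀ N, DecidableEq (I N)]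
    (X : ∀ N, I N → Finset (Fin (M N)))
    (P : ∀ N, (i : I N) → QuditSpace d (M N) →L[ℂ] QuditSpace d (M N))
    (A : ∀ N, QuditSpace d (M N))
    (hK : ∀ N (i : I N), (X N i).card ≤ K)
    (hC : ∀ N (i : I N),
      (Finset.univ.filter fun i' : I N => i' ≠ i ∧ (X N i ∩ X N i').Nonempty).card ≤ C)
    (hproj : ∀ N (i : I N), IsOrthProj (P N i))
    (hsupp : ∀ N (i : I N), SupportedOn (X N i) (P N i))
    (hA : ∀ N, ‖A N‖ = 1)
    (hlim : Tendsto (fun N => ‖(∑ i : I N, P N i) (A N)‖) atTop (nhds 0))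
    (Ch : ℝ) (hCh : 0 ≤ Ch)
    (h : ∀ N, (i : I N) → QuditSpace d (M N) →L[ℂ] QuditSpace d (M N))
    (hhsa : ∀ N (i : I N), ∀ v w : QuditSpace d (M N),
      (inner ℂ ((h N i) v) w : ℂ) = inner ℂ v ((h N i) w))
    (hhsupp : ∀ N (i : I N), SupportedOn (X N i) (h N i))
    (hhnorm : ∀ N (i : I N), ‖h N i‖ ≤ Ch) :
    Tendsto (fun N => ‖(∑ i : I N, (P N i) ∘L (h N i) ∘L (P N i)) (A N)‖) atTop (nhds 0) := by
  have hbound : ∀ N, ‖(∑ i : I N, (P N i) ∘L (h N i) ∘L (P N i)) (A N)‖ ≤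
      Real.sqrt (Ch ^ 2 * (‖(∑ i : I N, P N i) (A N)‖ ^ 2
        + 2 * ((C : ℝ) + 1) * ‖(∑ i : I N, P N i) (A N)‖)) := by
    intro N
    have hk := key_bound C (X N) (P N) (h N) (A N) (hA N) (hC N) (hproj N) (hsupp N)
      (hhsupp N) Ch hCh (hhnorm N)
    have h2 := Real.sqrt_le_sqrt hk
    rwa [Real.sqrt_sq (norm_nonneg _)] at h2
  have hglim : Tendsto (fun N => Real.sqrt (Ch ^ 2 * (‖(∑ i : I N, P N i) (A N)‖ ^ 2
      + 2 * ((C : ℝ) + 1) * ‖(∑ i : I N, P N i) (A N)‖))) atTop (nhds 0) := by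
    have h1 : Tendsto (fun N => Ch ^ 2 * (‖(∑ i : I N, P N i) (A N)‖ ^ 2
        + 2 * ((C : ℝ) + 1) * ‖(∑ i : I N, P N i) (A N)‖)) atTop
        (nhds (Ch ^ 2 * ((0:ℝ) ^ 2 + 2 * ((C : ℝ) + 1) * 0))) :=
      ((hlim.pow 2).add (hlim.const_mul _)).const_mul _
    have h2 : (Ch ^ 2 * ((0:ℝ) ^ 2 + 2 * ((C : ℝ) + 1) * 0)) = 0 := by ring
    rw [h2] at h1
    have h3 := h1.sqrt
    rwa [Real.sqrt_zero] at h3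
  exact squeeze_zero (fun N => norm_nonneg _) hbound hglim
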